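/- Let ℓ ≥ 1, R = 𝔽₂[X]/(X^ℓ-1), and A a free R-module with Hamming weight from the induced 𝔽₂-basis. Suppose ỹ, y ∈ A satisfy: there exist y' , u, v ∈ A with ỹ = y' + v, y' - y = (1+X)·u, |u| ≤ Δ₁, and for all 1 ≤ i ≤ t, |Σ_{j∈[0,i)} Xʲ·v| ≤ Δ₂. Then for every i ∈ ℕ, |Σ_{j∈[0,i)} Xʲ·(ỹ - y)| ≤ 2Δ₁ + ⌈i/t⌉·Δ₂. -/

import Mathlib

/-- Multiplication by `X^k` on the free module `R^n`, `R = 𝔽₂[X]/(X^ℓ-1)`,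
in coefficient coordinates: `(X^k · a)_{j,i} = a_{j, i-k}`. -/
def shiftk (ℓ n : ℕ) (k : ℕ) (a : Fin n × ZMod ℓ → ZMod 2) : Fin n × ZMod ℓ → ZMod 2 :=
  fun p => a (p.1, p.2 - (k : ZMod ℓ))

set_option linter.unusedSectionVars false
section aux

variable {ℓ n : ℕ} [NeZero ℓ]

lemma hn_add_le (a b : Fin n × ZMod ℓ → ZMod 2) :
    hammingNorm (a + b) ≤ hammingNorm a + hammingNorm b := by
  have h := hammingDist_triangle (a + b) b 0
  rw [hammingDist_zero_right, hammingDist_eq_hammingNorm, show -(a + b) + b = a by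
      funext p; exact (show ∀ x y : ZMod 2, -(x + y) + y = x by decide) _ _,
    hammingDist_zero_right] at h
  exact h

lemma shiftk_add (k : ℕ) (a b : Fin n × ZMod ℓ → ZMod 2) :
    shiftk ℓ n k (a + b) = shiftk ℓ n k a + shiftk ℓ n k b := rfl

lemma shiftk_norm (k : ℕ) (a : Fin n × ZMod ℓ → ZMod 2) :
    hammingNorm (shiftk ℓ n k a) = hammingNorm a := by
  unfold hammingNorm shiftk
  apply Finset.card_nbij' (i := fun p => (p.1, p.2 - (k : ZMod ℓ)))
    (j := fun p => (p.1, p.2 + (k : ZMod ℓ))) <;> simp [Set.MapsTo, Set.LeftInvOn, Set.RightInvOn]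

lemma shiftk_shiftk (k j : ℕ) (a : Fin n × ZMod ℓ → ZMod 2) :
    shiftk ℓ n k (shiftk ℓ n j a) = shiftk ℓ n (k + j) a := by
  funext p
  simp [shiftk, sub_sub, Nat.cast_add]

lemma shiftk_sum {s : Finset ℕ} (k : ℕ) (f : ℕ → Fin n × ZMod ℓ → ZMod 2) :
    shiftk ℓ n k (∑ j ∈ s, f j) = ∑ j ∈ s, shiftk ℓ n k (f j) := by
  funext p
  simp [shiftk, Finset.sum_apply]

lemma shiftk_zero (a : Fin n × ZMod ℓ → ZMod 2) : shiftk ℓ n 0 a = a := by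
  funext p; simp [shiftk]

lemma telescope (u : Fin n × ZMod ℓ → ZMod 2) (i : ℕ) :
    ∑ j ∈ Finset.range i, shiftk ℓ n j (fun p => u p + u (p.1, p.2 - 1))
      = u + shiftk ℓ n i u := by
  induction i with
  | zero =>
      simp [shiftk_zero]
      funext p; simp [CharTwo.add_self_eq_zero]
  | succ i ih =>
      rw [Finset.sum_range_succ, ih]
      funext p
      have h2 : ∀ x : ZMod 2, x + x = 0 := by decide
      simp only [Pi.add_apply, shiftk]
      have : ((i : ZMod ℓ) + 1) = ((i + 1 : ℕ) : ZMod ℓ) := by push_cast; ring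
      rw [show p.2 - (i : ZMod ℓ) - 1 = p.2 - ((i+1 : ℕ) : ZMod ℓ) by
        rw [sub_sub, this]]
      exact (show ∀ a b c : ZMod 2, a + b + (b + c) = a + c by decide) _ _ _

end aux

/-- if `ỹ = y' + v` with `y' - y = (1+X)u`, `|u| ≤ Δ₁`, and all prefix sums
`∑_{j<i} Xʲ v` for `1 ≤ i ≤ t` of weight `≤ Δ₂`, then for every `i`,
`|∑_{j<i} Xʲ (ỹ - y)| ≤ 2Δ₁ + ⌈i/t⌉ Δ₂`.  (Here `⌈i/t⌉ = (i + t - 1)/t` since `t ≥ 1`.) -/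
theorem stmt3 (ℓ : ℕ) [NeZero ℓ] {n : ℕ} (Δ₁ Δ₂ t : ℕ) (ht : 1 ≤ t)
    (yt y y' u v : Fin n × ZMod ℓ → ZMod 2)
    (hdecomp : yt = y' + v)
    (hcompat : y' - y = (fun p => u p + u (p.1, p.2 - 1)))
    (hu : hammingNorm u ≤ Δ₁)
    (hv : ∀ i, 1 ≤ i → i ≤ t →
      hammingNorm (∑ j ∈ Finset.range i, shiftk ℓ n j v) ≤ Δ₂) :
    ∀ i : ℕ,
      hammingNorm (∑ j ∈ Finset.range i, shiftk ℓ n j (yt - y)) ≤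
        2 * Δ₁ + ((i + t - 1) / t) * Δ₂ := by
  -- block bound for v
  have hblock : ∀ i : ℕ,
      hammingNorm (∑ j ∈ Finset.range i, shiftk ℓ n j v) ≤ ((i + t - 1) / t) * Δ₂ := by
    intro i
    induction i using Nat.strong_induction_on with
    | _ i ih =>
      rcases Nat.eq_zero_or_pos i with h0 | h1
      · subst h0
        simp [hammingNorm_zero, Nat.zero_le]
      rcases le_or_gt i t with hle | hlt
      · calc hammingNorm (∑ j ∈ Finset.range i, shiftk ℓ n j v) ≤ Δ₂ := hv i h1 hle
          _ ≤ ((i + t - 1) / t) * Δ₂ := by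
            have : 1 ≤ (i + t - 1) / t := Nat.one_le_div_iff (by omega) |>.2 (by omega)
            nlinarith
      · set m := i - t with hm
        have him : i = t + m := by omega
        have hsplit : ∑ j ∈ Finset.range i, shiftk ℓ n j v
            = (∑ j ∈ Finset.range t, shiftk ℓ n j v)
              + shiftk ℓ n t (∑ j ∈ Finset.range m, shiftk ℓ n j v) := by
          rw [him, Finset.sum_range_add, shiftk_sum]
          congr 1
          apply Finset.sum_congr rfl
          intro j _
          rw [shiftk_shiftk]
        rw [hsplit]
        have h1' := hv t ht le_rfl
        have h2' := ih m (by omega)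
        have hdiv : (i + t - 1) / t = (m + t - 1) / t + 1 := by
          have : i + t - 1 = (m + t - 1) + t := by omega
          rw [this, Nat.add_div_right _ (by omega)]
        calc hammingNorm _ ≤ hammingNorm (∑ j ∈ Finset.range t, shiftk ℓ n j v)
              + hammingNorm (shiftk ℓ n t (∑ j ∈ Finset.range m, shiftk ℓ n j v)) :=
              hn_add_le _ _
          _ ≤ Δ₂ + ((m + t - 1) / t) * Δ₂ := by
              rw [shiftk_norm]; exact Nat.add_le_add h1' h2'
          _ = ((i + t - 1) / t) * Δ₂ := by rw [hdiv]; ring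
  intro i
  have hyd : yt - y = (fun p => u p + u (p.1, p.2 - 1)) + v := by
    rw [hdecomp, ← hcompat]; abel
  have hsum : ∑ j ∈ Finset.range i, shiftk ℓ n j (yt - y)
      = (u + shiftk ℓ n i u) + ∑ j ∈ Finset.range i, shiftk ℓ n j v := by
    rw [hyd]
    rw [show (∑ j ∈ Finset.range i, shiftk ℓ n j
        ((fun p => u p + u (p.1, p.2 - 1)) + v))
      = (∑ j ∈ Finset.range i, shiftk ℓ n j (fun p => u p + u (p.1, p.2 - 1)))
        + ∑ j ∈ Finset.range i, shiftk ℓ n j v by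
      rw [← Finset.sum_add_distrib]
      exact Finset.sum_congr rfl fun j _ => shiftk_add j _ _]
    rw [telescope]
  rw [hsum]
  calc hammingNorm _ ≤ hammingNorm (u + shiftk ℓ n i u)
        + hammingNorm (∑ j ∈ Finset.range i, shiftk ℓ n j v) := hn_add_le _ _
    _ ≤ (hammingNorm u + hammingNorm (shiftk ℓ n i u)) + ((i + t - 1) / t) * Δ₂ :=
        Nat.add_le_add (hn_add_le _ _) (hblock i)
    _ ≤ 2 * Δ₁ + ((i + t - 1) / t) * Δ₂ := by
        rw [shiftk_norm]; omega
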